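/- Let K > 0, r ∈ ℝ, σ > 0, T > 0, and let u(x,t) = x·N(d₁) − K·e^{−r(T−t)}·N(d₂) be the Black-Scholes call price with d₁, d₂ as usual. Then for every x > 0, lim_{t → T⁻} u(x,t) = max(x − K, 0). -/

import Mathlib

open Real MeasureTheory

noncomputable def stdNormalCDF (z : ℝ) : ℝ :=
  (Real.sqrt (2 * Real.pi))⁻¹ * ∫ s in Set.Iic z, Real.exp (-(s ^ 2) / 2)

lemma stdGaussian_integrable : Integrable (fun s : ℝ => Real.exp (-(s ^ 2) / 2)) := by
  have h := integrable_exp_neg_mul_sq (b := 1/2) (by norm_num)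
  refine h.congr ?_
  filter_upwards with s
  ring_nf

lemma stdGaussian_total : (∫ s : ℝ, Real.exp (-(s ^ 2) / 2)) = Real.sqrt (2 * Real.pi) := by
  have h := integral_gaussian (1/2)
  have : (fun s : ℝ => Real.exp (-(s ^ 2) / 2)) = fun x : ℝ => Real.exp (-(1/2) * x ^ 2) := by
    funext s; ring_nf
  rw [this, h]
  rw [show Real.pi / (1/2) = 2 * Real.pi by ring]

lemma sqrt2pi_pos : 0 < Real.sqrt (2 * Real.pi) :=
  Real.sqrt_pos.mpr (by positivity)

lemma stdNormalCDF_eq (z : ℝ) :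
    stdNormalCDF z = (Real.sqrt (2 * Real.pi))⁻¹ *
      ((∫ s in Set.Iic (0:ℝ), Real.exp (-(s ^ 2) / 2)) +
        ∫ s in (0:ℝ)..z, Real.exp (-(s ^ 2) / 2)) := by
  rw [stdNormalCDF]
  congr 1
  have := intervalIntegral.integral_Iic_sub_Iic (f := fun s : ℝ => Real.exp (-(s ^ 2) / 2))
    (μ := volume) (a := 0) (b := z) stdGaussian_integrable.integrableOn
    stdGaussian_integrable.integrableOn
  linarith

lemma stdNormalCDF_continuous : Continuous stdNormalCDF := by
  have : Continuous fun z : ℝ => (Real.sqrt (2 * Real.pi))⁻¹ *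
      ((∫ s in Set.Iic (0:ℝ), Real.exp (-(s ^ 2) / 2)) +
        ∫ s in (0:ℝ)..z, Real.exp (-(s ^ 2) / 2)) := by
    exact continuous_const.mul (continuous_const.add
      (stdGaussian_integrable.continuous_primitive 0))
  exact this.congr fun z => (stdNormalCDF_eq z).symm

lemma stdNormalCDF_atTop : Filter.Tendsto stdNormalCDF Filter.atTop (nhds 1) := by
  have h1 : Filter.Tendsto (fun z : ℝ => ∫ s in (0:ℝ)..z, Real.exp (-(s ^ 2) / 2))
      Filter.atTop (nhds (∫ s in Set.Ioi (0:ℝ), Real.exp (-(s ^ 2) / 2))) :=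
    MeasureTheory.intervalIntegral_tendsto_integral_Ioi 0
      stdGaussian_integrable.integrableOn Filter.tendsto_id
  have h2 : Filter.Tendsto stdNormalCDF Filter.atTop
      (nhds ((Real.sqrt (2 * Real.pi))⁻¹ *
        ((∫ s in Set.Iic (0:ℝ), Real.exp (-(s ^ 2) / 2)) +
          ∫ s in Set.Ioi (0:ℝ), Real.exp (-(s ^ 2) / 2)))) := by
    have hadd : Filter.Tendsto (fun z : ℝ =>
        (∫ s in Set.Iic (0:ℝ), Real.exp (-(s ^ 2) / 2)) +
          ∫ s in (0:ℝ)..z, Real.exp (-(s ^ 2) / 2)) Filter.atTop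
        (nhds ((∫ s in Set.Iic (0:ℝ), Real.exp (-(s ^ 2) / 2)) +
          ∫ s in Set.Ioi (0:ℝ), Real.exp (-(s ^ 2) / 2))) := tendsto_const_nhds.add h1
    exact (hadd.const_mul _).congr fun z => (stdNormalCDF_eq z).symm
  have h3 : (∫ s in Set.Iic (0:ℝ), Real.exp (-(s ^ 2) / 2)) +
      (∫ s in Set.Ioi (0:ℝ), Real.exp (-(s ^ 2) / 2)) = Real.sqrt (2 * Real.pi) := by
    rw [intervalIntegral.integral_Iic_add_Ioi stdGaussian_integrable.integrableOn
      stdGaussian_integrable.integrableOn, stdGaussian_total]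
  rw [h3] at h2
  rwa [inv_mul_cancel₀ sqrt2pi_pos.ne'] at h2

lemma stdNormalCDF_atBot : Filter.Tendsto stdNormalCDF Filter.atBot (nhds 0) := by
  have h1 : Filter.Tendsto (fun z : ℝ => ∫ s in z..(0:ℝ), Real.exp (-(s ^ 2) / 2))
      Filter.atBot (nhds (∫ s in Set.Iic (0:ℝ), Real.exp (-(s ^ 2) / 2))) :=
    MeasureTheory.intervalIntegral_tendsto_integral_Iic 0
      stdGaussian_integrable.integrableOn Filter.tendsto_id
  have h2 : ∀ z : ℝ, stdNormalCDF z = (Real.sqrt (2 * Real.pi))⁻¹ *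
      ((∫ s in Set.Iic (0:ℝ), Real.exp (-(s ^ 2) / 2)) -
        ∫ s in z..(0:ℝ), Real.exp (-(s ^ 2) / 2)) := by
    intro z
    rw [stdNormalCDF_eq z, intervalIntegral.integral_symm z 0]
    ring
  have h3 := ((tendsto_const_nhds (x := ∫ s in Set.Iic (0:ℝ), Real.exp (-(s ^ 2) / 2))).sub
    h1).const_mul (Real.sqrt (2 * Real.pi))⁻¹
  simp only [sub_self, mul_zero] at h3
  exact h3.congr fun z => (h2 z).symm

lemma stdNormalCDF_zero : stdNormalCDF 0 = 1 / 2 := by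
  have hsym : (∫ s in Set.Iic (0:ℝ), Real.exp (-(s ^ 2) / 2)) =
      ∫ s in Set.Ioi (0:ℝ), Real.exp (-(s ^ 2) / 2) := by
    have := integral_comp_neg_Iic (0:ℝ) (fun s => Real.exp (-(s ^ 2) / 2))
    simp only [neg_neg, neg_zero, neg_sq] at this
    exact this
  have htot : (∫ s in Set.Iic (0:ℝ), Real.exp (-(s ^ 2) / 2)) +
      (∫ s in Set.Ioi (0:ℝ), Real.exp (-(s ^ 2) / 2)) = Real.sqrt (2 * Real.pi) := by
    rw [intervalIntegral.integral_Iic_add_Ioi stdGaussian_integrable.integrableOn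
      stdGaussian_integrable.integrableOn, stdGaussian_total]
  have h0 : (∫ s in Set.Iic (0:ℝ), Real.exp (-(s ^ 2) / 2)) = Real.sqrt (2 * Real.pi) / 2 := by
    rw [← hsym] at htot; linarith
  rw [stdNormalCDF, h0]
  field_simp

theorem stmt6 (K r σ T : ℝ) (hK : 0 < K) (hσ : 0 < σ) (hT : 0 < T) :
    ∀ x : ℝ, 0 < x →
      Filter.Tendsto (fun t : ℝ =>
          x * stdNormalCDF ((Real.log (x / K) + (r + σ ^ 2 / 2) * (T - t)) / (σ * Real.sqrt (T - t)))
          - K * Real.exp (-r * (T - t))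
            * stdNormalCDF ((Real.log (x / K) + (r + σ ^ 2 / 2) * (T - t)) / (σ * Real.sqrt (T - t))
                - σ * Real.sqrt (T - t)))
        (nhdsWithin T (Set.Iio T)) (nhds (max (x - K) 0)) := by
  intro x hx
  set L := Real.log (x / K) with hL
  set c := r + σ ^ 2 / 2 with hc
  -- τ := T - t tends to 0 from the right
  have hτ : Filter.Tendsto (fun t : ℝ => T - t) (nhdsWithin T (Set.Iio T))
      (nhdsWithin 0 (Set.Ioi 0)) := by
    apply tendsto_nhdsWithin_of_tendsto_nhds_of_eventually_within
    · have : Filter.Tendsto (fun t : ℝ => T - t) (nhds T) (nhds (T - T)) :=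
        (tendsto_const_nhds.sub Filter.tendsto_id)
      simpa using this.mono_left nhdsWithin_le_nhds
    · filter_upwards [self_mem_nhdsWithin] with t ht
      exact Set.mem_Ioi.mpr (sub_pos.mpr (Set.mem_Iio.mp ht))
  -- √τ tends to 0 from the right
  have hsq : Filter.Tendsto (fun t : ℝ => Real.sqrt (T - t)) (nhdsWithin T (Set.Iio T))
      (nhdsWithin 0 (Set.Ioi 0)) := by
    apply tendsto_nhdsWithin_of_tendsto_nhds_of_eventually_within
    · have h0 : Filter.Tendsto Real.sqrt (nhds 0) (nhds (Real.sqrt 0)) :=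
        Real.continuous_sqrt.continuousAt
      rw [Real.sqrt_zero] at h0
      exact h0.comp (hτ.mono_right nhdsWithin_le_nhds)
    · filter_upwards [self_mem_nhdsWithin] with t ht
      exact Set.mem_Ioi.mpr (Real.sqrt_pos.mpr (sub_pos.mpr (Set.mem_Iio.mp ht)))
  have hsq0 : Filter.Tendsto (fun t : ℝ => Real.sqrt (T - t)) (nhdsWithin T (Set.Iio T))
      (nhds 0) := hsq.mono_right nhdsWithin_le_nhds
  -- σ√τ tends to 0 from the right
  have hσsq : Filter.Tendsto (fun t : ℝ => σ * Real.sqrt (T - t)) (nhdsWithin T (Set.Iio T))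
      (nhdsWithin 0 (Set.Ioi 0)) := by
    apply tendsto_nhdsWithin_of_tendsto_nhds_of_eventually_within
    · simpa using (hsq0.const_mul σ)
    · filter_upwards [self_mem_nhdsWithin] with t ht
      exact Set.mem_Ioi.mpr (mul_pos hσ (Real.sqrt_pos.mpr (sub_pos.mpr (Set.mem_Iio.mp ht))))
  have hσsq0 : Filter.Tendsto (fun t : ℝ => σ * Real.sqrt (T - t)) (nhdsWithin T (Set.Iio T))
      (nhds 0) := hσsq.mono_right nhdsWithin_le_nhds
  have hinv : Filter.Tendsto (fun t : ℝ => (σ * Real.sqrt (T - t))⁻¹)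
      (nhdsWithin T (Set.Iio T)) Filter.atTop := hσsq.inv_tendsto_nhdsGT_zero
  -- numerator L + c τ → L
  have hnum : Filter.Tendsto (fun t : ℝ => L + c * (T - t)) (nhdsWithin T (Set.Iio T))
      (nhds L) := by
    have := (hτ.mono_right nhdsWithin_le_nhds).const_mul c
    have h2 := tendsto_const_nhds (x := L) (f := nhdsWithin T (Set.Iio T)) |>.add this
    simpa using h2
  -- e^{-r τ} → 1
  have hexp : Filter.Tendsto (fun t : ℝ => Real.exp (-r * (T - t)))
      (nhdsWithin T (Set.Iio T)) (nhds 1) := by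
    have h1 := (hτ.mono_right nhdsWithin_le_nhds).const_mul (-r)
    have h2 : Filter.Tendsto Real.exp (nhds (0:ℝ)) (nhds (Real.exp 0)) :=
      Real.continuous_exp.continuousAt
    rw [Real.exp_zero] at h2
    simpa [Function.comp_def] using h2.comp (by simpa using h1)
  have hd1eq : (fun t : ℝ => (L + c * (T - t)) / (σ * Real.sqrt (T - t)))
      = fun t : ℝ => (L + c * (T - t)) * (σ * Real.sqrt (T - t))⁻¹ := by
    funext t; rw [div_eq_mul_inv]
  rcases lt_trichotomy x K with hxK | hxK | hxK
  · -- x < K : both d₁, d₂ → -∞, limit 0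
    have hLneg : L < 0 := Real.log_neg (by positivity) ((div_lt_one hK).mpr hxK)
    have hd1 : Filter.Tendsto (fun t : ℝ => (L + c * (T - t)) / (σ * Real.sqrt (T - t)))
        (nhdsWithin T (Set.Iio T)) Filter.atBot := by
      rw [hd1eq]
      exact hnum.neg_mul_atTop hLneg hinv
    have hd2 : Filter.Tendsto (fun t : ℝ => (L + c * (T - t)) / (σ * Real.sqrt (T - t))
        - σ * Real.sqrt (T - t)) (nhdsWithin T (Set.Iio T)) Filter.atBot :=
      hd1.atBot_add (by simpa using hσsq0.neg)
    have hN1 := stdNormalCDF_atBot.comp hd1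
    have hN2 := stdNormalCDF_atBot.comp hd2
    have hmax : max (x - K) 0 = 0 := max_eq_right (by linarith)
    rw [hmax]
    have : Filter.Tendsto (fun t : ℝ =>
        x * stdNormalCDF ((L + c * (T - t)) / (σ * Real.sqrt (T - t)))
        - K * Real.exp (-r * (T - t))
          * stdNormalCDF ((L + c * (T - t)) / (σ * Real.sqrt (T - t)) - σ * Real.sqrt (T - t)))
        (nhdsWithin T (Set.Iio T)) (nhds (x * 0 - K * 1 * 0)) :=
      (hN1.const_mul x).sub (((hexp.const_mul K)).mul hN2)
    simpa using this
  · -- x = K : d₁, d₂ → 0, limit 0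
    subst hxK
    have hL0 : L = 0 := by rw [hL, div_self (ne_of_gt hx), Real.log_one]
    have hd1 : Filter.Tendsto (fun t : ℝ => (L + c * (T - t)) / (σ * Real.sqrt (T - t)))
        (nhdsWithin T (Set.Iio T)) (nhds 0) := by
      have heq : (fun t : ℝ => c / σ * Real.sqrt (T - t)) =ᶠ[nhdsWithin T (Set.Iio T)]
          (fun t : ℝ => (L + c * (T - t)) / (σ * Real.sqrt (T - t))) := by
        filter_upwards [self_mem_nhdsWithin] with t ht
        have hpos : 0 < T - t := sub_pos.mpr (Set.mem_Iio.mp ht)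
        have hs : Real.sqrt (T - t) ≠ 0 := (Real.sqrt_pos.mpr hpos).ne'
        have key : Real.sqrt (T - t) * Real.sqrt (T - t) = T - t := Real.mul_self_sqrt hpos.le
        rw [hL0, zero_add]
        field_simp
        linear_combination c * key
      have h2 : Filter.Tendsto (fun t : ℝ => c / σ * Real.sqrt (T - t))
          (nhdsWithin T (Set.Iio T)) (nhds 0) := by simpa using hsq0.const_mul (c / σ)
      exact Filter.Tendsto.congr' heq h2
    have hd2 : Filter.Tendsto (fun t : ℝ => (L + c * (T - t)) / (σ * Real.sqrt (T - t))
        - σ * Real.sqrt (T - t)) (nhdsWithin T (Set.Iio T)) (nhds 0) := by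
      simpa using hd1.sub hσsq0
    have hNcont : Filter.Tendsto stdNormalCDF (nhds (0:ℝ)) (nhds (stdNormalCDF 0)) :=
      stdNormalCDF_continuous.continuousAt
    rw [stdNormalCDF_zero] at hNcont
    have hN1 := hNcont.comp hd1
    have hN2 := hNcont.comp hd2
    have hmax : max (x - x) 0 = 0 := by simp
    rw [hmax]
    have : Filter.Tendsto (fun t : ℝ =>
        x * stdNormalCDF ((L + c * (T - t)) / (σ * Real.sqrt (T - t)))
        - x * Real.exp (-r * (T - t))
          * stdNormalCDF ((L + c * (T - t)) / (σ * Real.sqrt (T - t)) - σ * Real.sqrt (T - t)))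
        (nhdsWithin T (Set.Iio T)) (nhds (x * (1/2) - x * 1 * (1/2))) :=
      (hN1.const_mul x).sub (((hexp.const_mul x)).mul hN2)
    simpa using this
  · -- x > K : both d₁, d₂ → +∞, limit x - K
    have hLpos : 0 < L := Real.log_pos ((one_lt_div hK).mpr hxK)
    have hd1 : Filter.Tendsto (fun t : ℝ => (L + c * (T - t)) / (σ * Real.sqrt (T - t)))
        (nhdsWithin T (Set.Iio T)) Filter.atTop := by
      rw [hd1eq]
      exact hnum.pos_mul_atTop hLpos hinv
    have hd2 : Filter.Tendsto (fun t : ℝ => (L + c * (T - t)) / (σ * Real.sqrt (T - t))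
        - σ * Real.sqrt (T - t)) (nhdsWithin T (Set.Iio T)) Filter.atTop :=
      hd1.atTop_add (by simpa using hσsq0.neg)
    have hN1 := stdNormalCDF_atTop.comp hd1
    have hN2 := stdNormalCDF_atTop.comp hd2
    have hmax : max (x - K) 0 = x - K := max_eq_left (by linarith)
    rw [hmax]
    have : Filter.Tendsto (fun t : ℝ =>
        x * stdNormalCDF ((L + c * (T - t)) / (σ * Real.sqrt (T - t)))
        - K * Real.exp (-r * (T - t))
          * stdNormalCDF ((L + c * (T - t)) / (σ * Real.sqrt (T - t)) - σ * Real.sqrt (T - t)))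
        (nhdsWithin T (Set.Iio T)) (nhds (x * 1 - K * 1 * 1)) :=
      (hN1.const_mul x).sub (((hexp.const_mul K)).mul hN2)
    simpa using this
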